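/- Every closed discrete subspace D of a tree T (with the interval topology) is a countable union of antichains; specifically, defining D₀ to be the minimal elements of D and D_{n+1} the minimal elements of D ∖ (D₀ ∪ ⋯ ∪ D_n), every element of D lies in some D_n. -/

import Mathlib

/-- A tree: a partial order in which the set of strict predecessors of every
element is well-ordered. -/
def IsTree (α : Type*) [PartialOrder α] : Prop :=
  ∀ t : α, IsWellOrder {s : α // s < t} (fun a b => (a : α) < b)

/-- The interval topology on a tree: generated by the half-open intervals
`(s, t]` together with the singletons of minimal elements. -/
def intervalTopology (α : Type*) [PartialOrder α] : TopologicalSpace α :=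
  TopologicalSpace.generateFrom
    ({S | ∃ s t : α, s < t ∧ S = Set.Ioc s t} ∪
      {S | ∃ m : α, (∀ x : α, ¬ x < m) ∧ S = {m}})

/-- The minimal elements of a subset `S`. -/
def minimalsOf {α : Type*} [PartialOrder α] (S : Set α) : Set α :=
  {x ∈ S | ∀ y ∈ S, ¬ y < x}

/-- `residualSet D n` is what remains of `D` after removing the first `n` layers
of minimal elements. -/
def residualSet {α : Type*} [PartialOrder α] (D : Set α) : ℕ → Set α
  | 0 => D
  | n + 1 => residualSet D n \ minimalsOf (residualSet D n)

/-- `layer D n` is the set `Dₙ`: the minimal elements of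
`D ∖ (D₀ ∪ ⋯ ∪ D_{n-1})`. -/
def layer {α : Type*} [PartialOrder α] (D : Set α) (n : ℕ) : Set α :=
  minimalsOf (residualSet D n)

theorem stmt_7 {α : Type*} [PartialOrder α] [τ : TopologicalSpace α]
    (hτ : τ = intervalTopology α) (htree : IsTree α)
    (hsup : ∀ C : Set α, C.Nonempty → IsChain (· ≤ ·) C →
      (∃ b, b ∈ upperBounds C) → ∃ s, IsLUB C s)
    (D : Set α) (hDc : IsClosed D) (hDd : DiscreteTopology D) :
    (∀ n, IsAntichain (· ≤ ·) (layer D n)) ∧ (∀ d ∈ D, ∃ n, d ∈ layer D n) := by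
  constructor
  · intro n x hx y hy hne hle
    exact hy.2 x hx.1 (lt_of_le_of_ne hle hne)
  · intro d hd
    by_contra hcon
    push_neg at hcon
    have hres : ∀ n, d ∈ residualSet D n := by
      intro n; induction n with
      | zero => exact hd
      | succ n ih => exact ⟨ih, hcon n⟩
    have wf := (htree d).toIsWellFounded.wf
    set S : ℕ → Set {s : α // s < d} := fun n => {x | (x : α) ∈ residualSet D n} with hS
    have hSne : ∀ n, (S n).Nonempty := by
      intro n
      have h1 : d ∉ minimalsOf (residualSet D n) := hcon n
      simp only [minimalsOf, Set.mem_setOf_eq, not_and, not_forall, not_not] at h1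
      obtain ⟨y, hy, hyd⟩ := h1 (hres n)
      exact ⟨⟨y, hyd⟩, hy⟩
    set m : ℕ → {s : α // s < d} := fun n => wf.min (S n) (hSne n) with hm
    have hmmem : ∀ n, (m n : α) ∈ residualSet D n := fun n => wf.min_mem (S n) (hSne n)
    have hmlayer : ∀ n, (m n : α) ∈ layer D n := by
      intro n
      refine ⟨hmmem n, ?_⟩
      intro y hy hlt
      have hyd : y < d := hlt.trans (m n).2
      exact wf.not_lt_min (S n) (x := ⟨y, hyd⟩) hy hlt
    have hressub : ∀ n, residualSet D (n+1) ⊆ residualSet D n := fun n => Set.diff_subset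
    have hresD : ∀ n, residualSet D n ⊆ D := by
      intro n; induction n with
      | zero => exact subset_rfl
      | succ n ih => exact (hressub n).trans ih
    have hmlt : ∀ n, (m n : α) < (m (n+1) : α) := by
      intro n
      have h1 : m (n+1) ∈ S n := hressub n (hmmem (n+1))
      have h2 : ¬ ((m (n+1) : α) < (m n : α)) := wf.not_lt_min (S n) h1
      have h3 : m (n+1) ≠ m n := by
        intro heq
        have h4 := hmmem (n+1)
        rw [heq] at h4
        exact h4.2 (hmlayer n)
      rcases @trichotomous _ (fun a b : {x : α // x < d} => (a : α) < b) (htree d).toTrichotomous (m (n+1)) (m n) with h|h|h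
      · exact absurd h h2
      · exact absurd h h3
      · exact h
    have hmono : StrictMono (fun n => (m n : α)) := strictMono_nat_of_lt_succ hmlt
    have hchain : IsChain (· ≤ ·) (Set.range fun n => (m n : α)) := by
      rintro x ⟨i, rfl⟩ y ⟨j, rfl⟩ _
      rcases le_total i j with h | h
      · exact Or.inl (hmono.monotone h)
      · exact Or.inr (hmono.monotone h)
    obtain ⟨s, hs⟩ := hsup (Set.range fun n => (m n : α)) ⟨_, ⟨0, rfl⟩⟩ hchain
      ⟨d, by rintro x ⟨n, rfl⟩; exact (m n).2.le⟩
    have hmlts : ∀ n, (m n : α) < s :=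
      fun n => lt_of_lt_of_le (hmlt n) (hs.1 ⟨n+1, rfl⟩)
    have hkey : ∀ U : Set α, IsOpen U → s ∈ U → ∃ N, ∀ n, N ≤ n → (m n : α) ∈ U := by
      intro U hU
      rw [hτ] at hU
      change TopologicalSpace.GenerateOpen _ U at hU
      induction hU with
      | basic V hV =>
        intro hsV
        rcases hV with ⟨a, b, _hab, rfl⟩ | ⟨m', hm', rfl⟩
        · obtain ⟨has, hsb⟩ := hsV
          have hex : ∃ N, a < (m N : α) := by
            by_contra hno
            push_neg at hno
            have hub : s ≤ a := by
              apply hs.2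
              rintro x ⟨n, rfl⟩
              rcases @trichotomous _ (fun a b : {x : α // x < s} => (a : α) < b) (htree s).toTrichotomous ⟨a, has⟩ ⟨(m n : α), hmlts n⟩
                with h|h|h
              · exact absurd h (hno n)
              · exact le_of_eq (congrArg Subtype.val h.symm)
              · exact le_of_lt h
            exact absurd has (not_lt_of_ge hub)
          obtain ⟨N, hN⟩ := hex
          refine ⟨N, fun n hn => ?_⟩
          exact ⟨lt_of_lt_of_le hN (hmono.monotone hn), le_trans (hmlts n).le hsb⟩
        · exact absurd (hsV ▸ hmlts 0) (hm' _)
      | univ => exact fun _ => ⟨0, fun n _ => trivial⟩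
      | inter U V _ _ ihU ihV =>
        intro hsUV
        obtain ⟨N1, h1⟩ := ihU hsUV.1
        obtain ⟨N2, h2⟩ := ihV hsUV.2
        exact ⟨max N1 N2, fun n hn =>
          ⟨h1 n (le_trans (le_max_left _ _) hn), h2 n (le_trans (le_max_right _ _) hn)⟩⟩
      | sUnion T hT ih =>
        intro hsT
        obtain ⟨t, htT, hst⟩ := hsT
        obtain ⟨N, hN⟩ := ih t htT hst
        exact ⟨N, fun n hn => ⟨t, htT, hN n hn⟩⟩
    have hsD : s ∈ D := by
      rw [← hDc.closure_eq]
      rw [mem_closure_iff]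
      intro U hU hsU
      obtain ⟨N, hN⟩ := hkey U hU hsU
      exact ⟨(m N : α), hN N le_rfl, hresD N (hmmem N)⟩
    have hopen : IsOpen ({⟨s, hsD⟩} : Set D) := isOpen_discrete _
    rw [isOpen_induced_iff] at hopen
    obtain ⟨U, hU, hUeq⟩ := hopen
    have hsU : s ∈ U := by
      have h5 : (⟨s, hsD⟩ : D) ∈ Subtype.val ⁻¹' U := by rw [hUeq]; rfl
      exact h5
    obtain ⟨N, hN⟩ := hkey U hU hsU
    have hmD : (⟨(m N : α), hresD N (hmmem N)⟩ : D) ∈ Subtype.val ⁻¹' U := hN N le_rfl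
    rw [hUeq] at hmD
    have heq : (m N : α) = s := congrArg Subtype.val hmD
    exact absurd heq (ne_of_lt (hmlts N))
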